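/- For the boundary function g(m,k) = m^{1/2}(1+k/m)(k/(k+m))^γ with 0 ≤ γ < 1/2 and any fixed ξ < 1/2, one has lim_{m→∞} sup_{k ≥ 1} k^ξ / g(m,k) = 0. -/

import Mathlib

open Filter

private lemma term_le_aux (γ ξ a : ℝ) (hγ0 : 0 ≤ γ) (ha0 : 0 ≤ a) (haξ : ξ - γ ≤ a)
    (ha1 : a ≤ 1 - γ) (m k : ℕ) (hm : 1 ≤ m) (hk : 1 ≤ k) :
    ((k : ℝ) ^ ξ) /
        (Real.sqrt m * (1 + (k : ℝ) / m) * ((k : ℝ) / ((k : ℝ) + m)) ^ γ)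
      ≤ (m : ℝ) ^ (γ + a - 1/2) := by
  have hM : (1:ℝ) ≤ (m:ℝ) := by exact_mod_cast hm
  have hK : (1:ℝ) ≤ (k:ℝ) := by exact_mod_cast hk
  set M := (m:ℝ) with hMdef
  set K := (k:ℝ) with hKdef
  have hM0 : (0:ℝ) < M := by linarith
  have hK0 : (0:ℝ) < K := by linarith
  have hKM : (0:ℝ) < K + M := by linarith
  have hden : 0 < Real.sqrt M * (1 + K / M) * (K / (K + M)) ^ γ := by
    have h1 : 0 < Real.sqrt M := Real.sqrt_pos.mpr hM0
    have h2 : 0 < 1 + K / M := by positivity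
    have h3 : 0 < (K / (K + M)) ^ γ := Real.rpow_pos_of_pos (by positivity) γ
    positivity
  rw [div_le_iff₀ hden]
  -- key inequality: K^(ξ-γ) ≤ M^(γ+a-1) * (K+M)^(1-γ)
  have key : K ^ (ξ - γ) ≤ M ^ (γ + a - 1) * (K + M) ^ (1 - γ) := by
    have h1 : K ^ a ≤ (K + M) ^ a :=
      Real.rpow_le_rpow hK0.le (by linarith) ha0
    have h2 : M ^ (1 - γ - a) ≤ (K + M) ^ (1 - γ - a) :=
      Real.rpow_le_rpow hM0.le (by linarith) (by linarith)
    have h3 : K ^ a * M ^ (1 - γ - a) ≤ (K + M) ^ a * (K + M) ^ (1 - γ - a) :=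
      mul_le_mul h1 h2 (Real.rpow_nonneg hM0.le _) (Real.rpow_nonneg hKM.le _)
    have h4 : (K + M) ^ a * (K + M) ^ (1 - γ - a) = (K + M) ^ (1 - γ) := by
      rw [← Real.rpow_add hKM]; ring_nf
    have h5 : M ^ (γ + a - 1) * (K ^ a * M ^ (1 - γ - a)) = K ^ a := by
      rw [mul_comm (K ^ a), ← mul_assoc, ← Real.rpow_add hM0,
        show γ + a - 1 + (1 - γ - a) = 0 by ring, Real.rpow_zero, one_mul]
    calc K ^ (ξ - γ) ≤ K ^ a := Real.rpow_le_rpow_of_exponent_le hK haξ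
      _ = M ^ (γ + a - 1) * (K ^ a * M ^ (1 - γ - a)) := h5.symm
      _ ≤ M ^ (γ + a - 1) * ((K + M) ^ a * (K + M) ^ (1 - γ - a)) := by
          exact mul_le_mul_of_nonneg_left h3 (Real.rpow_nonneg hM0.le _)
      _ = M ^ (γ + a - 1) * (K + M) ^ (1 - γ) := by rw [h4]
  have key2 : K ^ ξ ≤ M ^ (γ + a - 1) * (K + M) ^ (1 - γ) * K ^ γ := by
    have := mul_le_mul_of_nonneg_right key (Real.rpow_nonneg hK0.le γ)
    calc K ^ ξ = K ^ (ξ - γ) * K ^ γ := by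
          rw [← Real.rpow_add hK0]; ring_nf
      _ ≤ M ^ (γ + a - 1) * (K + M) ^ (1 - γ) * K ^ γ := this
  refine key2.trans (le_of_eq ?_)
  -- algebraic identity
  rw [Real.sqrt_eq_rpow, Real.div_rpow hK0.le hKM.le,
    show 1 + K / M = (K + M) / M by field_simp; ring,
    show (1:ℝ) - γ = 1 + (-γ) by ring, Real.rpow_add hKM, Real.rpow_one,
    Real.rpow_neg hKM.le,
    show γ + a - 1 = (γ + a - 1/2) + 1/2 + (-1) by ring,
    Real.rpow_add hM0, Real.rpow_add hM0, Real.rpow_neg_one]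
  have hne : ((K + M) ^ γ) ≠ 0 := (Real.rpow_pos_of_pos hKM γ).ne'
  field_simp

theorem sup_kxi_div_g_tendsto_zero
    (γ ξ : ℝ) (hγ0 : 0 ≤ γ) (hγ : γ < 1/2) (hξ : ξ < 1/2) :
    Tendsto (fun m : ℕ =>
      ⨆ k : {k : ℕ // 1 ≤ k},
        ((k.1 : ℝ) ^ ξ) /
          (Real.sqrt m * (1 + (k.1 : ℝ) / m) * ((k.1 : ℝ) / ((k.1 : ℝ) + m)) ^ γ))
      atTop (nhds 0) := by
  have : Nonempty {k : ℕ // 1 ≤ k} := ⟨⟨1, le_refl 1⟩⟩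
  set a := max (ξ - γ) 0 with hadef
  have ha0 : 0 ≤ a := le_max_right _ _
  have haξ : ξ - γ ≤ a := le_max_left _ _
  have hae : γ + a - 1/2 < 0 := by
    rcases max_cases (ξ - γ) 0 with ⟨h, _⟩ | ⟨h, _⟩ <;> rw [hadef, h] <;> linarith
  have ha1 : a ≤ 1 - γ := by linarith
  have h0 : Tendsto (fun m : ℕ => (m : ℝ) ^ (γ + a - 1/2)) atTop (nhds 0) := by
    have := (tendsto_rpow_neg_atTop (by linarith : (0:ℝ) < -(γ + a - 1/2))).comp
      tendsto_natCast_atTop_atTop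
    simpa [Function.comp_def] using this
  refine squeeze_zero' ?_ ?_ h0
  · filter_upwards [eventually_ge_atTop 1] with m hm
    refine Real.iSup_nonneg fun k => ?_
    have hM : (1:ℝ) ≤ (m:ℝ) := by exact_mod_cast hm
    have hK : (1:ℝ) ≤ (k.1:ℝ) := by exact_mod_cast k.2
    have hden : 0 ≤ Real.sqrt m * (1 + (k.1:ℝ) / m) * ((k.1:ℝ) / ((k.1:ℝ) + m)) ^ γ := by
      have : (0:ℝ) ≤ 1 + (k.1:ℝ) / m := by positivity
      positivity
    exact div_nonneg (Real.rpow_nonneg (by positivity) _) hden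
  · filter_upwards [eventually_ge_atTop 1] with m hm
    exact Real.iSup_le
      (fun k => term_le_aux γ ξ a hγ0 ha0 haξ ha1 m k.1 hm k.2)
      (Real.rpow_nonneg (by positivity) _)
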